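/- Let n be a positive integer, a ∈ ℂ \ {0}, α_k = -2^(k-1) a^k binom(n,k) for 1 ≤ k ≤ n and α_k = 0 for k > n, and s_m = ∑_{k=1}^n a^(m-k+1) binom(m, k-1) α_k. Then for each m with 1 ≤ m ≤ n, the Hankel determinant det[(s_{i+j-2})_{i,j=1}^m] equals det[(α_{i+j-1})_{i,j=1}^m]. -/

import Mathlib

theorem hankel_moments_eq_hankel_alpha (n : ℕ) (hn : 0 < n) (a : ℂ) (ha : a ≠ 0)
    (α : ℕ → ℂ)
    (hα : ∀ k, 1 ≤ k → k ≤ n → α k = -(2 : ℂ) ^ (k - 1) * a ^ k * (n.choose k : ℂ))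
    (hα' : ∀ k, n < k → α k = 0)
    (s : ℕ → ℂ)
    (hs : ∀ m : ℕ, s m = ∑ k ∈ Finset.Icc 1 n,
      a ^ (m + 1 - k) * (m.choose (k - 1) : ℂ) * α k)
    (m : ℕ) (hm1 : 1 ≤ m) (hmn : m ≤ n) :
    Matrix.det (Matrix.of fun i j : Fin m => s ((i : ℕ) + (j : ℕ))) =
      Matrix.det (Matrix.of fun i j : Fin m => α ((i : ℕ) + (j : ℕ) + 1)) := by
  classical
  set P : Matrix (Fin m) (Fin m) ℂ :=
    Matrix.of (fun i u : Fin m => a ^ ((i : ℕ) - (u : ℕ)) * ((i : ℕ).choose (u : ℕ) : ℂ))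
    with hP
  have hPlow : P.BlockTriangular OrderDual.toDual := by
    intro i j hij
    have h1 : (i : ℕ) < (j : ℕ) := hij
    simp [hP, Nat.choose_eq_zero_of_lt h1]
  have hdetP : P.det = 1 := by
    rw [Matrix.det_of_lowerTriangular P hPlow]
    simp [hP]
  have key : (Matrix.of fun i j : Fin m => s ((i : ℕ) + (j : ℕ)))
      = P * (Matrix.of fun u v : Fin m => α ((u : ℕ) + (v : ℕ) + 1)) * P.transpose := by
    ext i j
    simp only [Matrix.mul_apply, Matrix.transpose_apply, Matrix.of_apply, hP]
    set g : ℕ × ℕ → ℂ := fun p =>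
      a ^ ((i : ℕ) - p.1) * ((i : ℕ).choose p.1 : ℂ) *
        α (p.1 + p.2 + 1) * (a ^ ((j : ℕ) - p.2) * ((j : ℕ).choose p.2 : ℂ)) with hg
    have hstep1 : s ((i : ℕ) + (j : ℕ)) = ∑ t ∈ Finset.range n,
        a ^ ((i : ℕ) + (j : ℕ) - t) * ((((i : ℕ) + (j : ℕ)).choose t : ℕ) : ℂ) * α (t + 1) := by
      rw [hs]
      rw [show Finset.Icc 1 n = Finset.Ico 1 (n + 1) by rw [Nat.Icc_eq_range']; rfl]
      rw [Finset.sum_Ico_eq_sum_range]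
      simp only [Nat.add_sub_cancel]
      refine Finset.sum_congr rfl ?_
      intro t _
      have h2 : (i : ℕ) + (j : ℕ) + 1 - (1 + t) = (i : ℕ) + (j : ℕ) - t := by omega
      have h3 : 1 + t - 1 = t := by omega
      rw [h2, h3, add_comm 1 t]
    have hstep2 : ∀ t : ℕ,
        a ^ ((i : ℕ) + (j : ℕ) - t) * ((((i : ℕ) + (j : ℕ)).choose t : ℕ) : ℂ) * α (t + 1)
          = ∑ p ∈ Finset.HasAntidiagonal.antidiagonal t, g p := by
      intro t
      rw [Nat.add_choose_eq]
      push_cast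
      rw [Finset.mul_sum, Finset.sum_mul]
      refine Finset.sum_congr rfl ?_
      intro p hp
      have hpt : p.1 + p.2 = t := Finset.HasAntidiagonal.mem_antidiagonal.mp hp
      by_cases hu : p.1 ≤ (i : ℕ)
      · by_cases hv : p.2 ≤ (j : ℕ)
        · have h4 : (i : ℕ) + (j : ℕ) - t = ((i : ℕ) - p.1) + ((j : ℕ) - p.2) := by omega
          simp only [hg, hpt]
          rw [h4, pow_add]
          ring
        · simp [hg, Nat.choose_eq_zero_of_lt (lt_of_not_ge hv)]
      · simp [hg, Nat.choose_eq_zero_of_lt (lt_of_not_ge hu)]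
    have hdisj : (↑(Finset.range n) : Set ℕ).PairwiseDisjoint Finset.HasAntidiagonal.antidiagonal := by
      intro x _ y _ hxy
      simp only [Function.onFun, Finset.disjoint_left]
      intro p hx hy
      exact hxy (by rw [← Finset.HasAntidiagonal.mem_antidiagonal.mp hx, Finset.HasAntidiagonal.mem_antidiagonal.mp hy])
    have hbig1 : ∑ t ∈ Finset.range n, ∑ p ∈ Finset.HasAntidiagonal.antidiagonal t, g p
        = ∑ p ∈ Finset.range n ×ˢ Finset.range n, g p := by
      rw [← Finset.sum_biUnion hdisj]
      refine Finset.sum_subset ?_ ?_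
      · intro p hp
        obtain ⟨t, ht, hpt⟩ := Finset.mem_biUnion.mp hp
        have ht' : t < n := Finset.mem_range.mp ht
        have := Finset.HasAntidiagonal.mem_antidiagonal.mp hpt
        exact Finset.mem_product.mpr ⟨Finset.mem_range.mpr (by omega),
          Finset.mem_range.mpr (by omega)⟩
      · intro p hp hnp
        have hge : n ≤ p.1 + p.2 := by
          by_contra hlt
          push_neg at hlt
          exact hnp (Finset.mem_biUnion.mpr ⟨p.1 + p.2, Finset.mem_range.mpr hlt,
            Finset.HasAntidiagonal.mem_antidiagonal.mpr rfl⟩)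
        simp [hg, hα' (p.1 + p.2 + 1) (by omega)]
    have hbig2 : ∑ p ∈ Finset.range m ×ˢ Finset.range m, g p
        = ∑ p ∈ Finset.range n ×ˢ Finset.range n, g p := by
      refine Finset.sum_subset ?_ ?_
      · intro p hp
        obtain ⟨h1, h2⟩ := Finset.mem_product.mp hp
        exact Finset.mem_product.mpr ⟨Finset.mem_range.mpr (lt_of_lt_of_le
          (Finset.mem_range.mp h1) hmn), Finset.mem_range.mpr (lt_of_lt_of_le
          (Finset.mem_range.mp h2) hmn)⟩
      · intro p hp hnp
        by_cases h1 : p.1 < m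
        · have h2 : ¬ p.2 < m := fun hc => hnp (Finset.mem_product.mpr
            ⟨Finset.mem_range.mpr h1, Finset.mem_range.mpr hc⟩)
          have : (j : ℕ) < p.2 := lt_of_lt_of_le j.isLt (not_lt.mp h2)
          simp [hg, Nat.choose_eq_zero_of_lt this]
        · have : (i : ℕ) < p.1 := lt_of_lt_of_le i.isLt (not_lt.mp h1)
          simp [hg, Nat.choose_eq_zero_of_lt this]
    calc s ((i : ℕ) + (j : ℕ))
        = ∑ p ∈ Finset.range n ×ˢ Finset.range n, g p := by
          rw [hstep1]
          rw [← hbig1]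
          exact Finset.sum_congr rfl (fun t _ => hstep2 t)
      _ = ∑ u ∈ Finset.range m, ∑ v ∈ Finset.range m, g (u, v) := by
          rw [← hbig2, Finset.sum_product]
      _ = ∑ v : Fin m, (∑ u : Fin m,
            a ^ ((i : ℕ) - (u : ℕ)) * ((i : ℕ).choose (u : ℕ) : ℂ) *
              α ((u : ℕ) + (v : ℕ) + 1)) *
            (a ^ ((j : ℕ) - (v : ℕ)) * ((j : ℕ).choose (v : ℕ) : ℂ)) := by
          rw [Finset.sum_comm]
          rw [← Fin.sum_univ_eq_sum_range (fun v => _)]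
          refine Finset.sum_congr rfl ?_
          intro v _
          rw [Finset.sum_mul, ← Fin.sum_univ_eq_sum_range (fun u => _)]
  rw [key, Matrix.det_mul, Matrix.det_mul, hdetP, Matrix.det_transpose, hdetP]
  ring
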